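/- arXiv:math/0607054 — 2 statements merged into one kernel-verified Lean document; each statement's English description precedes it below -/
import Mathlib

section
/- Let I > 0 and c ∈ (0,1]. Define h_c(l) = 2 c l² Φ(−l√(cI)/2) and the acceptance rate a^c(l) = 2Φ(−l√(cI)/2). If l̂_c maximizes h_c on [0,∞), then a^c(l̂_c) does not depend on c; that is, for any c, c' ∈ (0,1], a^c(l̂_c) = a^{c'}(l̂_{c'}). -/
open Real Set Filter MeasureTheory ProbabilityTheory

open Topology

/-- Standard normal cumulative distribution function. -/
noncomputable def Phi (x : ℝ) : ℝ := ∫ t in Set.Iic x, Real.exp (-t^2/2) / Real.sqrt (2*Real.pi)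

/-- Speed of the limiting diffusion for RWM-within-Gibbs. -/
noncomputable def hSpeed (I c l : ℝ) : ℝ := 2 * c * l^2 * Phi (-(l * Real.sqrt (c * I)) / 2)

/-- Asymptotic average acceptance rate of RWM-within-Gibbs. -/
noncomputable def aRate (I c l : ℝ) : ℝ := 2 * Phi (-(l * Real.sqrt (c * I)) / 2)

noncomputable def phi (x : ℝ) : ℝ := Real.exp (-x^2/2) / Real.sqrt (2*Real.pi)

lemma phi_pos (x : ℝ) : 0 < phi x := by
  unfold phi
  positivity

lemma phi_cont : Continuous phi := by
  unfold phi
  fun_prop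

lemma phi_eq (x : ℝ) : phi x = (Real.sqrt (2*Real.pi))⁻¹ * Real.exp (-(1/2) * x^2) := by
  unfold phi; rw [div_eq_inv_mul]; ring_nf

lemma phi_integrable : Integrable phi := by
  have := (integrable_exp_neg_mul_sq (by norm_num : (0:ℝ) < 1/2)).const_mul (Real.sqrt (2*Real.pi))⁻¹
  have heq : phi = fun x => (Real.sqrt (2*Real.pi))⁻¹ * Real.exp (-(1/2) * x^2) := funext phi_eq
  rw [heq]; exact this

lemma hasDerivAt_phi (x : ℝ) : HasDerivAt phi (-x * phi x) x := by
  have h1 : HasDerivAt (fun t : ℝ => -t^2/2) (-x) x := by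
    have : HasDerivAt (fun t : ℝ => -t^2/2) (-(2*x^1)/2) x := by
      exact (((hasDerivAt_pow 2 x).neg).div_const 2)
    convert this using 1; ring
  have h2 := (h1.exp).div_const (Real.sqrt (2*Real.pi))
  have : HasDerivAt phi (Real.exp (-x^2/2) * (-x) / Real.sqrt (2*Real.pi)) x := h2
  convert this using 1
  unfold phi; ring

lemma Phi_eq (x : ℝ) : Phi x = ∫ t in Set.Iic x, phi t := rfl

lemma Phi_pos (x : ℝ) : 0 < Phi x := by
  rw [Phi_eq]
  rw [setIntegral_pos_iff_support_of_nonneg_ae]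
  · have : Function.support phi = Set.univ := by
      ext t; simp [Function.mem_support, (phi_pos t).ne']
    rw [this, Set.univ_inter]
    simp
  · exact Eventually.of_forall (fun t => (phi_pos t).le)
  · exact phi_integrable.integrableOn

lemma Phi_sub (a b : ℝ) : Phi b - Phi a = ∫ t in a..b, phi t := by
  rw [Phi_eq, Phi_eq, intervalIntegral.integral_Iic_sub_Iic phi_integrable.integrableOn phi_integrable.integrableOn]

lemma hasDerivAt_Phi (x : ℝ) : HasDerivAt Phi (phi x) x := by
  have h : HasDerivAt (fun u => ∫ t in (0:ℝ)..u, phi t) (phi x) x :=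
    intervalIntegral.integral_hasDerivAt_right
      phi_integrable.intervalIntegrable
      (phi_cont.stronglyMeasurableAtFilter _ _)
      phi_cont.continuousAt
  have : Phi = fun u => Phi 0 + ∫ t in (0:ℝ)..u, phi t := by
    funext u; rw [← Phi_sub]; ring
  rw [this]
  simpa using (h.const_add (Phi 0))

lemma phi_tendsto_atBot : Tendsto phi atBot (𝓝 0) := by
  have h2 : Tendsto (fun x:ℝ => -x^2/2) atBot atBot := by
    apply tendsto_atBot_mono' atBot _ tendsto_id
    filter_upwards [eventually_le_atBot (-2:ℝ)] with x hx
    show -x^2/2 ≤ x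
    nlinarith
  have h3 : Tendsto (fun x:ℝ => Real.exp (-x^2/2)) atBot (𝓝 0) :=
    Real.tendsto_exp_atBot.comp h2
  have := h3.div_const (Real.sqrt (2*Real.pi))
  rw [zero_div] at this
  exact this

lemma id_mul_phi_integrable : Integrable (fun t => -t * phi t) := by
  have h := integrable_rpow_mul_exp_neg_mul_sq (by norm_num : (0:ℝ) < 1/2) (by norm_num : (-1:ℝ) < 1)
  have h2 := (h.const_mul (-(Real.sqrt (2*Real.pi))⁻¹))
  apply h2.congr
  filter_upwards with t
  rw [Real.rpow_one, phi_eq]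
  ring

lemma phi_eq_integral (x : ℝ) : phi x = ∫ t in Set.Iic x, -t * phi t := by
  have := integral_Iic_of_hasDerivAt_of_tendsto (f := phi) (f' := fun t => -t * phi t)
    (a := x) (m := 0)
    (hasDerivAt_phi x).continuousAt.continuousWithinAt
    (fun t _ => hasDerivAt_phi t)
    id_mul_phi_integrable.integrableOn
    phi_tendsto_atBot
  rw [this, sub_zero]

lemma mills_key (x : ℝ) : 0 < phi x + x * Phi x := by
  rcases le_or_gt 0 x with hx | hx
  · have := phi_pos x
    have := Phi_pos x
    nlinarith
  · have h1 : phi x + x * Phi x = ∫ t in Set.Iic x, (x - t) * phi t := by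
      rw [phi_eq_integral, Phi_eq, ← integral_const_mul]
      rw [← integral_add (id_mul_phi_integrable.integrableOn)
        ((phi_integrable.integrableOn).const_mul x)]
      congr 1 with t; ring
    have hint : Integrable (fun t => (x - t) * phi t) := by
      have := id_mul_phi_integrable.add (phi_integrable.const_mul x)
      apply this.congr
      filter_upwards with t
      simp only [Pi.add_apply]; ring
    have h2 : Phi (x-1) ≤ ∫ t in Set.Iic x, (x - t) * phi t := by
      calc Phi (x-1) = ∫ t in Set.Iic (x-1), phi t := Phi_eq _
        _ ≤ ∫ t in Set.Iic (x-1), (x - t) * phi t := by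
            apply setIntegral_mono_on phi_integrable.integrableOn hint.integrableOn
              measurableSet_Iic
            intro t ht
            have : (1:ℝ) ≤ x - t := by simp at ht; linarith
            nlinarith [phi_pos t]
        _ ≤ ∫ t in Set.Iic x, (x - t) * phi t := by
            apply setIntegral_mono_set hint.integrableOn
            · filter_upwards [ae_restrict_mem measurableSet_Iic] with t ht
              have h2 : t ≤ x := ht
              show (0:ℝ) ≤ (x - t) * phi t
              nlinarith [phi_pos t]
            · exact HasSubset.Subset.eventuallyLE (Set.Iic_subset_Iic.mpr (by linarith))
    rw [h1]
    exact lt_of_lt_of_le (Phi_pos (x-1)) h2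

lemma mills_strictMono : StrictMono (fun x : ℝ => Phi x / phi x) := by
  apply strictMono_of_deriv_pos
  intro x
  have h := (hasDerivAt_Phi x).div (hasDerivAt_phi x) (phi_pos x).ne'
  rw [show (fun x => Phi x / phi x) = Phi / phi from rfl, h.deriv]
  apply div_pos
  · have h1 := mills_key x
    have h2 := phi_pos x
    nlinarith
  · exact pow_pos (phi_pos x) 2

lemma hasDerivAt_G (s u : ℝ) : HasDerivAt (fun u => 2*u^2*Phi (-(u*s)/2))
    (4*u*Phi (-(u*s)/2) - u^2*s*phi (-(u*s)/2)) u := by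
  have h1 : HasDerivAt (fun u : ℝ => -(u*s)/2) (-s/2) u := by
    simpa using ((hasDerivAt_id u).mul_const s).neg.div_const 2
  have h2 : HasDerivAt (fun u => Phi (-(u*s)/2)) (phi (-(u*s)/2) * (-s/2)) u :=
    (hasDerivAt_Phi _).comp u h1
  have h3 : HasDerivAt (fun u:ℝ => 2*u^2) (2*(2*u^1)) u := (hasDerivAt_pow 2 u).const_mul 2
  have : HasDerivAt (fun u => 2*u^2*Phi (-(u*s)/2)) _ u := h3.mul h2
  convert this using 1
  ring

lemma crit_unique (s : ℝ) (hs : 0 < s) (u u' : ℝ) (hu : 0 < u) (hu' : 0 < u')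
    (h : 4*u*Phi (-(u*s)/2) - u^2*s*phi (-(u*s)/2) = 0)
    (h' : 4*u'*Phi (-(u'*s)/2) - u'^2*s*phi (-(u'*s)/2) = 0) : u = u' := by
  have key : ∀ v : ℝ, 0 < v → 4*v*Phi (-(v*s)/2) - v^2*s*phi (-(v*s)/2) = 0 →
      Phi (-(v*s)/2) / phi (-(v*s)/2) = v*s/4 := by
    intro v hv hcrit
    have hp := phi_pos (-(v*s)/2)
    rw [div_eq_iff hp.ne']
    apply mul_left_cancel₀ hv.ne'
    linarith [hcrit]
  have k1 := key u hu h
  have k2 := key u' hu' h'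
  by_contra hne
  rcases lt_or_gt_of_ne hne with hlt | hlt
  · have harg : -(u'*s)/2 < -(u*s)/2 := by nlinarith
    have := mills_strictMono harg
    simp only at this
    rw [k1, k2] at this
    nlinarith
  · have harg : -(u*s)/2 < -(u'*s)/2 := by nlinarith
    have := mills_strictMono harg
    simp only at this
    rw [k1, k2] at this
    nlinarith

lemma hSpeed_scale (I c : ℝ) (hc : 0 ≤ c) (x : ℝ) :
    hSpeed I 1 (Real.sqrt c * x) = hSpeed I c x := by
  unfold hSpeed
  have harg : -(Real.sqrt c * x * Real.sqrt (1*I))/2 = -(x * Real.sqrt (c*I))/2 := by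
    rw [one_mul, Real.sqrt_mul hc]; ring
  rw [harg, mul_pow, Real.sq_sqrt hc]
  ring

lemma maxG (I c : ℝ) (hc : 0 < c) (l : ℝ)
    (hmax : IsMaxOn (hSpeed I c) (Set.Ici 0) l) :
    IsMaxOn (hSpeed I 1) (Set.Ici 0) (Real.sqrt c * l) := by
  intro u hu
  have hsc : (0:ℝ) < Real.sqrt c := Real.sqrt_pos.mpr hc
  have hx : u / Real.sqrt c ∈ Set.Ici (0:ℝ) := by
    simp only [Set.mem_Ici] at hu ⊢
    positivity
  have h1 : Real.sqrt c * (u / Real.sqrt c) = u := by field_simp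
  have := hmax hx
  simp only [Set.mem_setOf_eq] at this ⊢
  calc hSpeed I 1 u = hSpeed I c (u / Real.sqrt c) := by rw [← hSpeed_scale I c hc.le, h1]
    _ ≤ hSpeed I c l := this
    _ = hSpeed I 1 (Real.sqrt c * l) := (hSpeed_scale I c hc.le l).symm

lemma maxG_pos (I : ℝ) (hI : 0 < I) (u : ℝ) (hu : u ∈ Set.Ici (0:ℝ))
    (hmax : IsMaxOn (hSpeed I 1) (Set.Ici 0) u) : 0 < u := by
  have h1 := hmax (by norm_num : (1:ℝ) ∈ Set.Ici (0:ℝ))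
  simp only [Set.mem_setOf_eq] at h1
  have hpos : 0 < hSpeed I 1 1 := by
    unfold hSpeed
    have := Phi_pos (-(1 * Real.sqrt (1*I))/2)
    nlinarith
  rcases eq_or_lt_of_le (Set.mem_Ici.mp hu) with h | h
  · exfalso
    have : hSpeed I 1 u = 0 := by unfold hSpeed; rw [← h]; ring
    linarith
  · exact h

theorem stmt1 (I c c' : ℝ) (hI : 0 < I) (hc : c ∈ Set.Ioc (0:ℝ) 1) (hc' : c' ∈ Set.Ioc (0:ℝ) 1)
    (lc lc' : ℝ) (hlc : lc ∈ Set.Ici (0:ℝ)) (hlc' : lc' ∈ Set.Ici (0:ℝ))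
    (hmaxc : IsMaxOn (hSpeed I c) (Set.Ici 0) lc)
    (hmaxc' : IsMaxOn (hSpeed I c') (Set.Ici 0) lc') :
    aRate I c lc = aRate I c' lc' := by
  obtain ⟨hc0, _⟩ := hc
  obtain ⟨hc'0, _⟩ := hc'
  set s := Real.sqrt (1*I) with hs_def
  have hs : 0 < s := Real.sqrt_pos.mpr (by linarith)
  set u := Real.sqrt c * lc with hu_def
  set u' := Real.sqrt c' * lc' with hu'_def
  have hmu : IsMaxOn (hSpeed I 1) (Set.Ici 0) u := maxG I c hc0 lc hmaxc
  have hmu' : IsMaxOn (hSpeed I 1) (Set.Ici 0) u' := maxG I c' hc'0 lc' hmaxc'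
  have hu_mem : u ∈ Set.Ici (0:ℝ) := by
    simp only [Set.mem_Ici] at hlc ⊢
    positivity
  have hu'_mem : u' ∈ Set.Ici (0:ℝ) := by
    simp only [Set.mem_Ici] at hlc' ⊢
    positivity
  have hupos := maxG_pos I hI u hu_mem hmu
  have hu'pos := maxG_pos I hI u' hu'_mem hmu'
  -- hSpeed I 1 = fun v => 2*v^2*Phi (-(v*s)/2)
  have hGeq : hSpeed I 1 = fun v => 2*v^2*Phi (-(v*s)/2) := by
    funext v; unfold hSpeed; rw [hs_def]; ring_nf
  rw [hGeq] at hmu hmu'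
  have hd : ∀ v : ℝ, 0 < v → IsMaxOn (fun v => 2*v^2*Phi (-(v*s)/2)) (Set.Ici 0) v →
      4*v*Phi (-(v*s)/2) - v^2*s*phi (-(v*s)/2) = 0 := by
    intro v hv hmax
    exact (hmax.isLocalMax (Ici_mem_nhds hv)).hasDerivAt_eq_zero (hasDerivAt_G s v)
  have huu' : u = u' := crit_unique s hs u u' hupos hu'pos
    (hd u hupos hmu) (hd u' hu'pos hmu')
  have harate : ∀ d l : ℝ, 0 ≤ d → aRate I d l = 2 * Phi (-((Real.sqrt d * l)*s)/2) := by
    intro d l hd0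
    unfold aRate
    congr 2
    rw [hs_def, one_mul, Real.sqrt_mul hd0]
    ring
  rw [harate c lc hc0.le, harate c' lc' hc'0.le, ← hu_def, ← hu'_def, huu']
end

section
/- Let A ∼ N(μ, σ²) with σ > 0. Then E[min(1, e^A)] = Φ(μ/σ) + e^{μ + σ²/2} Φ(−σ − μ/σ), where Φ is the standard normal CDF. -/
open Real Set Filter MeasureTheory ProbabilityTheory
open scoped NNReal ENNReal

lemma subst_aux (g : ℝ → ℝ) (c d a : ℝ) (hc : c ≠ 0) :
    ∫ y in (fun t => c*t+d) '' (Iic a), g y = ∫ t in Iic a, |c| * g (c*t+d) := by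
  have := integral_image_eq_integral_abs_deriv_smul (s := Iic a) (f := fun t => c*t+d)
    (f' := fun _ => c) measurableSet_Iic
    (fun x _ => by simpa using ((hasDerivWithinAt_id x (Iic a)).const_mul c).add_const d)
    (fun x _ y _ h => by
      simp only [add_left_inj] at h
      exact mul_left_cancel₀ hc h) g
  simpa [smul_eq_mul] using this

lemma coe_var (σ : ℝ) (hσ : 0 < σ) : ((Real.toNNReal (σ^2) : ℝ≥0) : ℝ) = σ^2 :=
  Real.coe_toNNReal _ (sq_nonneg σ)

lemma gauss_Iic (m σ a : ℝ) (hσ : 0 < σ) :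
    ∫ t in Iic a, gaussianPDFReal m (Real.toNNReal (σ^2)) t = Phi ((a-m)/σ) := by
  have himg : (fun t => σ*t+m) '' (Iic ((a-m)/σ)) = Iic a := by
    ext y
    simp only [mem_image, mem_Iic]
    constructor
    · rintro ⟨t, ht, rfl⟩
      nlinarith [(le_div_iff₀ hσ).mp ht]
    · intro hy
      exact ⟨(y-m)/σ, by rw [div_le_div_iff_of_pos_right hσ]; linarith, by field_simp; ring⟩
  rw [← himg, subst_aux _ _ _ _ hσ.ne', Phi]
  apply setIntegral_congr_fun measurableSet_Iic
  intro t _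
  simp only [gaussianPDFReal_def, coe_var σ hσ, abs_of_pos hσ]
  have h1 : Real.sqrt (2*π*σ^2) = Real.sqrt (2*π) * σ := by
    rw [Real.sqrt_mul (by positivity), Real.sqrt_sq hσ.le]
  rw [h1]
  have h2 : (σ*t+m-m)^2 = σ^2 * t^2 := by ring
  rw [h2]
  have h3 : -(σ^2*t^2)/(2*σ^2) = -t^2/2 := by field_simp
  rw [h3, div_eq_inv_mul]
  field_simp

lemma gauss_Ici (m σ a : ℝ) (hσ : 0 < σ) :
    ∫ t in Ici a, gaussianPDFReal m (Real.toNNReal (σ^2)) t = Phi ((m-a)/σ) := by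
  have himg : (fun t => (-σ)*t+m) '' (Iic ((m-a)/σ)) = Ici a := by
    ext y
    simp only [mem_image, mem_Iic, mem_Ici]
    constructor
    · rintro ⟨t, ht, rfl⟩
      nlinarith [(le_div_iff₀ hσ).mp ht]
    · intro hy
      exact ⟨(m-y)/σ, by rw [div_le_div_iff_of_pos_right hσ]; linarith, by field_simp; ring⟩
  rw [← himg, subst_aux _ _ _ _ (by simpa using hσ.ne'), Phi]
  apply setIntegral_congr_fun measurableSet_Iic
  intro t _
  simp only [gaussianPDFReal_def, coe_var σ hσ, abs_neg, abs_of_pos hσ]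
  have h1 : Real.sqrt (2*π*σ^2) = Real.sqrt (2*π) * σ := by
    rw [Real.sqrt_mul (by positivity), Real.sqrt_sq hσ.le]
  rw [h1]
  have h2 : (-σ*t+m-m)^2 = σ^2 * t^2 := by ring
  rw [h2]
  have h3 : -(σ^2*t^2)/(2*σ^2) = -t^2/2 := by field_simp
  rw [h3, div_eq_inv_mul]
  field_simp

lemma complete_square (μ σ x : ℝ) (hσ : 0 < σ) :
    gaussianPDFReal μ (Real.toNNReal (σ^2)) x * Real.exp x
      = Real.exp (μ + σ^2/2) * gaussianPDFReal (μ+σ^2) (Real.toNNReal (σ^2)) x := by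
  simp only [gaussianPDFReal_def, coe_var σ hσ]
  have h : σ^2 ≠ 0 := by positivity
  rw [mul_assoc, ← Real.exp_add, mul_comm (Real.exp (μ + σ^2/2))]
  simp only [mul_assoc]
  rw [← Real.exp_add]
  congr 1
  field_simp
  ring

theorem stmt6 (μ σ : ℝ) (hσ : 0 < σ) :
    ∫ x, min 1 (Real.exp x) ∂(gaussianReal μ (Real.toNNReal (σ^2)))
      = Phi (μ/σ) + Real.exp (μ + σ^2/2) * Phi (-σ - μ/σ) := by
  have hv : Real.toNNReal (σ^2) ≠ 0 := by
    simp [Real.toNNReal_eq_zero, not_le]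
    positivity
  set v := Real.toNNReal (σ^2) with hvdef
  rw [gaussianReal_of_var_ne_zero μ hv]
  have hmeas : Measurable (fun x => (gaussianPDFReal μ v x).toNNReal) :=
    (measurable_gaussianPDFReal μ v).real_toNNReal
  have hpdf : gaussianPDF μ v = fun x => ((fun x => (gaussianPDFReal μ v x).toNNReal) x : ℝ≥0∞) := rfl
  rw [hpdf, integral_withDensity_eq_integral_smul hmeas]
  have hg : ∀ x, (gaussianPDFReal μ v x).toNNReal • min 1 (Real.exp x)
      = gaussianPDFReal μ v x * min 1 (Real.exp x) := by
    intro x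
    rw [NNReal.smul_def, smul_eq_mul, Real.coe_toNNReal _ (gaussianPDFReal_nonneg μ v x)]
  simp_rw [hg]
  -- integrability
  have hint : Integrable (fun x => gaussianPDFReal μ v x * min 1 (Real.exp x)) := by
    apply (integrable_gaussianPDFReal μ v).mono
    · exact (stronglyMeasurable_gaussianPDFReal μ v).aestronglyMeasurable.mul
        ((continuous_const.min Real.continuous_exp).aestronglyMeasurable)
    · filter_upwards with x
      rw [Real.norm_eq_abs, Real.norm_eq_abs, abs_mul,
        abs_of_nonneg (gaussianPDFReal_nonneg μ v x)]
      have h1 : |min 1 (Real.exp x)| ≤ 1 := by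
        rw [abs_of_nonneg (le_min zero_le_one (Real.exp_nonneg x))]
        exact min_le_left _ _
      calc gaussianPDFReal μ v x * |min 1 (Real.exp x)| ≤ gaussianPDFReal μ v x * 1 := by
            exact mul_le_mul_of_nonneg_left h1 (gaussianPDFReal_nonneg μ v x)
        _ = gaussianPDFReal μ v x := mul_one _
  rw [← intervalIntegral.integral_Iic_add_Ioi (b := 0) hint.integrableOn hint.integrableOn]
  have hIic : ∫ x in Iic 0, gaussianPDFReal μ v x * min 1 (Real.exp x)
      = Real.exp (μ + σ^2/2) * Phi (-σ - μ/σ) := by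
    have : ∀ x ∈ Iic (0:ℝ), gaussianPDFReal μ v x * min 1 (Real.exp x)
        = Real.exp (μ + σ^2/2) * gaussianPDFReal (μ+σ^2) v x := by
      intro x hx
      rw [min_eq_right (Real.exp_le_one_iff.mpr (mem_Iic.mp hx)), complete_square μ σ x hσ]
    rw [setIntegral_congr_fun measurableSet_Iic this, integral_const_mul,
      gauss_Iic (μ+σ^2) σ 0 hσ]
    congr 2
    field_simp
    ring
  have hIoi : ∫ x in Ioi 0, gaussianPDFReal μ v x * min 1 (Real.exp x) = Phi (μ/σ) := by
    have : ∀ x ∈ Ioi (0:ℝ), gaussianPDFReal μ v x * min 1 (Real.exp x)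
        = gaussianPDFReal μ v x := by
      intro x hx
      rw [min_eq_left (Real.one_le_exp (le_of_lt (mem_Ioi.mp hx))), mul_one]
    rw [setIntegral_congr_fun measurableSet_Ioi this, ← integral_Ici_eq_integral_Ioi,
      gauss_Ici μ σ 0 hσ, sub_zero]
  rw [hIic, hIoi]
  ring
end
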